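/- With the notation above, if additionally the BP fixed point on the cycle is the global minimizer of the Bethe free energy functional on the cycle (which holds since BP on a single cycle has a unique stable fixed point minimizing the Bethe free energy), then log(Z_BP^c) ≤ ΔS_c, giving the two-sided bound log(Z_BP^c) ≤ ΔS_c ≤ log(Z̃_BP^c). -/

import Mathlib

open scoped BigOperators

lemma aux_split (a b : ℝ) (ha : 0 ≤ a) (hb : b ≠ 0) :
    a * Real.log (a / b) = a * Real.log a - a * Real.log b := by
  rcases ha.eq_or_lt with h | h
  · simp [← h]
  · rw [Real.log_div h.ne' hb]; ring

lemma aux_klpt (a b : ℝ) (ha : 0 ≤ a) (hb : 0 < b) : a - b ≤ a * Real.log (a / b) := by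
  rcases ha.eq_or_lt with h | h
  · simp [← h]; linarith
  · have h1 : Real.log (b / a) ≤ b / a - 1 := Real.log_le_sub_one_of_pos (div_pos hb h)
    have h2 : Real.log (b / a) = - Real.log (a / b) := by
      rw [← Real.log_inv]; congr 1; rw [inv_div]
    have h3 := mul_le_mul_of_nonneg_left h1 h.le
    rw [h2] at h3
    have h4 : a * (b / a - 1) = b - a := by field_simp
    linarith [h3, h4.le]

/-- With the notation of the cycle entropy correction, if the BP
fixed point beliefs `(b_i^c, b_ℓ^c)` on the cycle (with normalization `Z_BP^c`, so that
`p` is the BP factorization) are a global minimizer of the Bethe free energy functional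
on the cycle, then `log(Z_BP^c) ≤ ΔS_c`, giving the two-sided bound
`log(Z_BP^c) ≤ ΔS_c ≤ log(Z̃_BP^c)`. -/
theorem stmt_12 (n q : ℕ) [NeZero n] (hq : 0 < q)
    (p : (Fin n → Fin q) → ℝ)
    (bi : Fin n → Fin q → ℝ) (bl : Fin n → Fin q → Fin q → ℝ)
    (hppos : ∀ s, 0 < p s) (hpsum : ∑ s, p s = 1)
    (hbipos : ∀ i x, 0 < bi i x) (hblpos : ∀ i x y, 0 < bl i x y)
    (hcons1 : ∀ i x, ∑ y, bl i x y = bi i x)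
    (hcons2 : ∀ i y, ∑ x, bl i x y = bi (i + 1) y)
    (ZBP : ℝ)
    (hZBP : ZBP = ∑ s : Fin n → Fin q, ∏ i, bl i (s i) (s (i + 1)) / bi i (s i))
    -- `p` is the BP factorization of the cycle measure
    (hfact : ∀ s, p s = (∏ i, bl i (s i) (s (i + 1)) / bi i (s i)) / ZBP)
    -- the BP fixed point is a global minimizer of the Bethe free energy functional:
    -- its value `-log Z_BP` is below the Bethe free energy of any consistent beliefs
    (hglobal : ∀ (qi : Fin n → Fin q → ℝ) (ql : Fin n → Fin q → Fin q → ℝ),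
      (∀ i x, 0 < qi i x) → (∀ i x y, 0 < ql i x y) →
      (∀ i x, ∑ y, ql i x y = qi i x) → (∀ i y, ∑ x, ql i x y = qi (i + 1) y) →
      (∀ i, ∑ x, qi i x = 1) →
      -Real.log ZBP ≤
        (∑ i, ∑ x, ∑ y, ql i x y * Real.log (ql i x y / (bl i x y / bi i x)))
          - ∑ i, ∑ x, qi i x * Real.log (qi i x)) :
    let pi : Fin n → Fin q → ℝ := fun i x => ∑ s, if s i = x then p s else 0
    let pl : Fin n → Fin q → Fin q → ℝ :=
      fun i x y => ∑ s, if s i = x ∧ s (i + 1) = y then p s else 0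
    let ΔS : ℝ := (-∑ s, p s * Real.log (p s))
        - ∑ i, (-∑ x, pi i x * Real.log (pi i x))
        + ∑ i, ∑ x, ∑ y, pl i x y * Real.log (pl i x y / (pi i x * pi (i + 1) y))
    let Ztilde : ℝ :=
      ∑ s : Fin n → Fin q, (∏ i, pl i (s i) (s (i + 1))) / ∏ i, pi i (s i)
    Real.log ZBP ≤ ΔS ∧ ΔS ≤ Real.log Ztilde := by
  intro pi pl ΔS Ztilde
  haveI : Nonempty (Fin q) := ⟨⟨0, hq⟩⟩
  have hZpos : 0 < ZBP := by
    rw [hZBP]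
    exact Finset.sum_pos
      (fun s _ => Finset.prod_pos fun i _ => div_pos (hblpos i _ _) (hbipos i _))
      Finset.univ_nonempty
  -- positivity of marginals
  have pipos : ∀ i x, 0 < pi i x := by
    intro i x
    refine Finset.sum_pos' (fun s _ => ?_) ⟨fun _ => x, Finset.mem_univ _, ?_⟩
    · split_ifs; exacts [(hppos s).le, le_rfl]
    · simpa using (hppos (fun _ => x))
  have plnn : ∀ i x y, 0 ≤ pl i x y := by
    intro i x y
    refine Finset.sum_nonneg fun s _ => ?_
    split_ifs; exacts [(hppos s).le, le_rfl]
  have plge : ∀ (s : Fin n → Fin q) i, p s ≤ pl i (s i) (s (i + 1)) := by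
    intro s i
    have := Finset.single_le_sum
      (f := fun t : Fin n → Fin q =>
        if t i = s i ∧ t (i + 1) = s (i + 1) then p t else 0)
      (fun t _ => by split_ifs; exacts [(hppos t).le, le_rfl])
      (Finset.mem_univ s)
    simpa using this
  have plpos : ∀ (s : Fin n → Fin q) i, 0 < pl i (s i) (s (i + 1)) :=
    fun s i => lt_of_lt_of_le (hppos s) (plge s i)
  -- consistency of exact marginals
  have plc1 : ∀ i x, ∑ y, pl i x y = pi i x := by
    intro i x
    show ∑ y, ∑ s, _ = _
    rw [Finset.sum_comm]
    refine Finset.sum_congr rfl fun s _ => ?_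
    by_cases h : s i = x <;> simp [ite_and, h]
  have plc2 : ∀ i y, ∑ x, pl i x y = pi (i + 1) y := by
    intro i y
    show ∑ x, ∑ s, _ = _
    rw [Finset.sum_comm]
    refine Finset.sum_congr rfl fun s _ => ?_
    by_cases h : s (i + 1) = y <;> simp [ite_and, h]
  have pis : ∀ i, ∑ x, pi i x = 1 := by
    intro i
    show ∑ x, ∑ s, _ = _
    rw [Finset.sum_comm]
    rw [← hpsum]
    refine Finset.sum_congr rfl fun s _ => ?_
    simp
  -- grouping lemmas
  have grp1 : ∀ (i : Fin n) (g : Fin q → ℝ),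
      ∑ x, pi i x * g x = ∑ s, p s * g (s i) := by
    intro i g
    show ∑ x, (∑ s, _) * g x = _
    simp only [Finset.sum_mul, ite_mul, zero_mul]
    rw [Finset.sum_comm]
    refine Finset.sum_congr rfl fun s _ => ?_
    simp
  have grp2 : ∀ (i : Fin n) (f : Fin q → Fin q → ℝ),
      ∑ x, ∑ y, pl i x y * f x y = ∑ s, p s * f (s i) (s (i + 1)) := by
    intro i f
    show ∑ x, ∑ y, (∑ s, _) * f x y = _
    simp only [Finset.sum_mul, ite_mul, zero_mul]
    have h1 : ∀ x : Fin q, (∑ y, ∑ s : Fin n → Fin q,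
        if s i = x ∧ s (i + 1) = y then p s * f x y else 0)
        = ∑ s : Fin n → Fin q, ∑ y,
        if s i = x ∧ s (i + 1) = y then p s * f x y else 0 :=
      fun x => Finset.sum_comm
    simp only [h1]
    rw [Finset.sum_comm]
    refine Finset.sum_congr rfl fun s _ => ?_
    simp [ite_and]
  -- abbreviations
  set A : ℝ := ∑ s, p s * Real.log (p s) with hA
  set B : ℝ := ∑ i, ∑ x, pi i x * Real.log (pi i x) with hB
  set C : ℝ := ∑ i, ∑ x, ∑ y, pl i x y * Real.log (pl i x y) with hC
  -- the shift identity
  have shiftB : ∑ i, ∑ y, pi (i + 1) y * Real.log (pi (i + 1) y) = B :=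
    Fintype.sum_equiv (Equiv.addRight (1 : Fin n)) _ _ (fun i => rfl)
  -- ΔS = C - B - A
  have hDS : ΔS = C - B - A := by
    have key1 : ∀ i : Fin n,
        ∑ x, ∑ y, pl i x y * Real.log (pl i x y / (pi i x * pi (i + 1) y))
          = (∑ x, ∑ y, pl i x y * Real.log (pl i x y))
            - (∑ x, pi i x * Real.log (pi i x))
            - (∑ y, pi (i + 1) y * Real.log (pi (i + 1) y)) := by
      intro i
      have hpt : ∀ x y, pl i x y * Real.log (pl i x y / (pi i x * pi (i + 1) y))
          = pl i x y * Real.log (pl i x y) - pl i x y * Real.log (pi i x)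
            - pl i x y * Real.log (pi (i + 1) y) := by
        intro x y
        rw [aux_split _ _ (plnn i x y) (mul_pos (pipos i x) (pipos _ y)).ne',
          Real.log_mul (pipos i x).ne' (pipos _ y).ne']
        ring
      simp only [hpt, Finset.sum_sub_distrib]
      congr 1
      · congr 1
        refine Finset.sum_congr rfl fun x _ => ?_
        rw [← Finset.sum_mul, plc1]
      · rw [Finset.sum_comm]
        refine Finset.sum_congr rfl fun y _ => ?_
        rw [← Finset.sum_mul, plc2]
    show (-A) - ∑ i, (-∑ x, pi i x * Real.log (pi i x)) + _ = _
    simp only [key1, Finset.sum_sub_distrib, Finset.sum_neg_distrib, shiftB, ← hB, ← hC]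
    ring
  -- the KL-type term for part 1
  have hE : ∑ i, ∑ x, ∑ y, pl i x y * Real.log (bl i x y / bi i x)
      = A + Real.log ZBP := by
    have hprod : ∀ s : Fin n → Fin q,
        (∏ i, bl i (s i) (s (i + 1)) / bi i (s i)) = p s * ZBP := by
      intro s
      rw [hfact s]
      exact (div_mul_cancel₀ _ hZpos.ne').symm
    have : ∀ i : Fin n, ∑ x, ∑ y, pl i x y * Real.log (bl i x y / bi i x)
        = ∑ s, p s * Real.log (bl i (s i) (s (i + 1)) / bi i (s i)) :=
      fun i => grp2 i (fun x y => Real.log (bl i x y / bi i x))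
    rw [Finset.sum_congr rfl fun i _ => this i, Finset.sum_comm]
    have : ∀ s : Fin n → Fin q,
        ∑ i, p s * Real.log (bl i (s i) (s (i + 1)) / bi i (s i))
        = p s * Real.log (p s) + p s * Real.log ZBP := by
      intro s
      rw [← Finset.mul_sum, ← Real.log_prod
        (fun i _ => (div_pos (hblpos i _ _) (hbipos i _)).ne'), hprod s,
        Real.log_mul (hppos s).ne' hZpos.ne']
      ring
    rw [Finset.sum_congr rfl fun s _ => this s, Finset.sum_add_distrib,
      ← Finset.sum_mul, hpsum, one_mul, ← hA]
  have hDval : ∑ i, ∑ x, ∑ y,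
      pl i x y * Real.log (pl i x y / (pi i x * (bl i x y / bi i x)))
      = C - B - A - Real.log ZBP := by
    have hpt : ∀ (i : Fin n) x y,
        pl i x y * Real.log (pl i x y / (pi i x * (bl i x y / bi i x)))
        = pl i x y * Real.log (pl i x y) - pl i x y * Real.log (pi i x)
          - pl i x y * Real.log (bl i x y / bi i x) := by
      intro i x y
      rw [aux_split _ _ (plnn i x y)
        (mul_pos (pipos i x) (div_pos (hblpos i x y) (hbipos i x))).ne',
        Real.log_mul (pipos i x).ne' (div_pos (hblpos i x y) (hbipos i x)).ne']
      ring
    simp only [hpt, Finset.sum_sub_distrib]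
    rw [hE]
    have hBpart : ∑ i, ∑ x, ∑ y, pl i x y * Real.log (pi i x) = B := by
      refine Finset.sum_congr rfl fun i _ => Finset.sum_congr rfl fun x _ => ?_
      rw [← Finset.sum_mul, plc1]
    rw [hBpart, ← hC]
    ring
  have hDnn : 0 ≤ ∑ i, ∑ x, ∑ y,
      pl i x y * Real.log (pl i x y / (pi i x * (bl i x y / bi i x))) := by
    have hz : ∀ (i : Fin n) x,
        ∑ y, (pl i x y - pi i x * (bl i x y / bi i x)) = 0 := by
      intro i x
      rw [Finset.sum_sub_distrib, plc1]
      have : ∑ y, pi i x * (bl i x y / bi i x) = pi i x := by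
        rw [← Finset.mul_sum, ← Finset.sum_div, hcons1,
          div_self (hbipos i x).ne', mul_one]
      rw [this, sub_self]
    have h0 : (0 : ℝ) = ∑ i : Fin n, ∑ x, ∑ y,
        (pl i x y - pi i x * (bl i x y / bi i x)) := by
      simp [hz]
    rw [h0]
    refine Finset.sum_le_sum fun i _ => Finset.sum_le_sum fun x _ =>
      Finset.sum_le_sum fun y _ => ?_
    exact aux_klpt _ _ (plnn i x y)
      (mul_pos (pipos i x) (div_pos (hblpos i x y) (hbipos i x)))
  constructor
  · rw [hDS]
    linarith [hDnn, hDval]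
  -- Part 2: Jensen
  · have hrpos : ∀ s : Fin n → Fin q,
        0 < (∏ i, pl i (s i) (s (i + 1))) / ∏ i, pi i (s i) :=
      fun s => div_pos (Finset.prod_pos fun i _ => plpos s i)
        (Finset.prod_pos fun i _ => pipos i (s i))
    have hDS2 : ΔS = ∑ s, p s * Real.log
        ((∏ i, pl i (s i) (s (i + 1))) / (∏ i, pi i (s i)) / p s) := by
      rw [hDS]
      have : ∀ s : Fin n → Fin q,
          p s * Real.log ((∏ i, pl i (s i) (s (i + 1))) / (∏ i, pi i (s i)) / p s)
          = (∑ i, p s * Real.log (pl i (s i) (s (i + 1))))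
            - (∑ i, p s * Real.log (pi i (s i))) - p s * Real.log (p s) := by
        intro s
        rw [Real.log_div (hrpos s).ne' (hppos s).ne',
          Real.log_div (Finset.prod_pos fun i _ => plpos s i).ne'
            (Finset.prod_pos fun i _ => pipos i (s i)).ne',
          Real.log_prod (fun i _ => (plpos s i).ne'),
          Real.log_prod (fun i _ => (pipos i (s i)).ne'),
          mul_sub, mul_sub, Finset.mul_sum, Finset.mul_sum]
      have c1 : C = ∑ s : Fin n → Fin q, ∑ i,
          p s * Real.log (pl i (s i) (s (i + 1))) := by
        rw [hC, show (∑ i : Fin n, ∑ x, ∑ y, pl i x y * Real.log (pl i x y))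
          = ∑ i : Fin n, ∑ s : Fin n → Fin q,
              p s * Real.log (pl i (s i) (s (i + 1))) from
          Finset.sum_congr rfl fun i _ => grp2 i (fun x y => Real.log (pl i x y))]
        exact Finset.sum_comm
      have b1 : B = ∑ s : Fin n → Fin q, ∑ i, p s * Real.log (pi i (s i)) := by
        rw [hB, show (∑ i : Fin n, ∑ x, pi i x * Real.log (pi i x))
          = ∑ i : Fin n, ∑ s : Fin n → Fin q, p s * Real.log (pi i (s i)) from
          Finset.sum_congr rfl fun i _ => grp1 i (fun x => Real.log (pi i x))]
        exact Finset.sum_comm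
      rw [Finset.sum_congr rfl fun s _ => this s, Finset.sum_sub_distrib,
        Finset.sum_sub_distrib, ← c1, ← b1, ← hA]
    rw [hDS2]
    have hjen := strictConcaveOn_log_Ioi.concaveOn.le_map_sum (t := Finset.univ)
      (w := p)
      (p := fun s : Fin n → Fin q =>
        (∏ i, pl i (s i) (s (i + 1))) / (∏ i, pi i (s i)) / p s)
      (fun s _ => (hppos s).le) hpsum
      (fun s _ => div_pos (hrpos s) (hppos s))
    simp only [smul_eq_mul] at hjen
    have hsum : ∑ s : Fin n → Fin q,
        p s * ((∏ i, pl i (s i) (s (i + 1))) / (∏ i, pi i (s i)) / p s) = Ztilde := by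
      refine Finset.sum_congr rfl fun s _ => ?_
      rw [mul_comm, div_mul_cancel₀ _ (hppos s).ne']
    rw [hsum] at hjen
    exact hjen
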